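/- Let H be a connected simple plane graph with minimum degree at least 3, let r ≥ 0 be an integer, let F be the set of faces of H and F' the set of faces of length at most r + 5. Then |F'| ≥ (r·|F| + 12)/(r + 3). -/

import Mathlib

/-- A loopless-or-not multigraph on vertex type `V` with edge type `E`:
each edge has a pair of endpoints. -/
structure Multigraph (V E : Type) where
  ends : E → Sym2 V

namespace Multigraph

variable {V E : Type}

/-- A multigraph is loopless if no edge has equal endpoints. -/
def Loopless (G : Multigraph V E) : Prop := ∀ e, ¬ (G.ends e).IsDiag

/-- The degree of a vertex: the number of edges incident with it. -/
noncomputable def degree (G : Multigraph V E) (v : V) : ℕ :=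
  Set.ncard {e : E | v ∈ G.ends e}

/-- Two (distinct) vertices are adjacent if some edge joins them. -/
def Adj (G : Multigraph V E) (u v : V) : Prop := u ≠ v ∧ ∃ e, G.ends e = s(u, v)

/-- One adjacency step avoiding a vertex set `A` and an edge set `S`. -/
def AdjAvoid (G : Multigraph V E) (A : Set V) (S : Set E) (u v : V) : Prop :=
  u ∉ A ∧ v ∉ A ∧ ∃ e, e ∉ S ∧ G.ends e = s(u, v)

/-- Reachability in the graph obtained by deleting the vertices `A` and edges `S`. -/
def Reach (G : Multigraph V E) (A : Set V) (S : Set E) : V → V → Prop :=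
  Relation.ReflTransGen (G.AdjAvoid A S)

/-- The graph minus the vertex set `A` is connected. -/
def ConnectedAvoiding (G : Multigraph V E) (A : Set V) : Prop :=
  ∀ u v : V, u ∉ A → v ∉ A → G.Reach A ∅ u v

def Connected (G : Multigraph V E) : Prop := G.ConnectedAvoiding ∅

def TwoConnected (G : Multigraph V E) : Prop :=
  3 ≤ Nat.card V ∧ ∀ x : V, G.ConnectedAvoiding {x}

/-- `{f, g}` is a 2-edge-cut: removing both destroys some reachability. -/
def IsTwoEdgeCut (G : Multigraph V E) (f g : E) : Prop :=
  f ≠ g ∧ ∃ u v : V, G.Reach ∅ ∅ u v ∧ ¬ G.Reach ∅ {f, g} u v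

/-- `{u, v}` is a 2-vertex-cut. -/
def IsVertexCut2 (G : Multigraph V E) (u v : V) : Prop :=
  u ≠ v ∧ ∃ x y : V, x ∉ ({u, v} : Set V) ∧ y ∉ ({u, v} : Set V) ∧ ¬ G.Reach {u, v} ∅ x y

/-- `K` is (the vertex set of) a connected component of `G − A`. -/
def IsCompAvoiding (G : Multigraph V E) (A : Set V) (K : Set V) : Prop :=
  ∃ x, x ∉ A ∧ K = {y | y ∉ A ∧ G.Reach A ∅ x y}

/-- `Z` is an anchor: no vertex of `Z` lies in a 2-vertex-cut, and every
nontrivial bridge (i.e. component of `G − {u,v}`) of every 2-vertex-cut `{u,v}`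
contains a vertex of `Z`. -/
def IsAnchor (G : Multigraph V E) (Z : Set V) : Prop :=
  (∀ z ∈ Z, ∀ u v : V, G.IsVertexCut2 u v → z ≠ u ∧ z ≠ v) ∧
  (∀ u v : V, G.IsVertexCut2 u v → ∀ K : Set V, G.IsCompAvoiding {u, v} K → ∃ z ∈ Z, z ∈ K)

/-- A (simple) path from `u` to `v` in a multigraph: a list of pairwise distinct
vertices together with the list of edges joining the consecutive vertices. -/
structure MPath (G : Multigraph V E) (u v : V) where
  verts : List V
  edges : List E
  len_eq : verts.length = edges.length + 1
  head_eq : verts.head? = some u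
  last_eq : verts.getLast? = some v
  ends_eq : ∀ i : ℕ, (hi : i < edges.length) →
    G.ends (edges.get ⟨i, hi⟩) =
      s(verts.get ⟨i, by omega⟩, verts.get ⟨i + 1, by omega⟩)
  vnodup : verts.Nodup
  enodup : edges.Nodup

/-- The internal vertices of a path: all vertices but the two endpoints. -/
def MPath.internal {G : Multigraph V E} {u v : V} (p : G.MPath u v) : List V :=
  (p.verts.drop 1).dropLast

/-- A branch: a nontrivial path whose endpoints have degree at least 3 and
whose internal vertices have degree 2. -/
def IsBranchPath (G : Multigraph V E) {u v : V} (p : G.MPath u v) : Prop :=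
  p.edges ≠ [] ∧ 3 ≤ G.degree u ∧ 3 ≤ G.degree v ∧ ∀ w ∈ p.internal, G.degree w = 2

/-- The edge sets of branches with both endpoints in `B` (a branch is determined,
up to reversal, by its edge set). -/
def branchSets (G : Multigraph V E) (B : Set V) : Set (Set E) :=
  {S | ∃ u v, u ∈ B ∧ v ∈ B ∧ ∃ p : G.MPath u v, G.IsBranchPath p ∧ {e | e ∈ p.edges} = S}

/-- An `(ℓ, Δ)`-earring: a base edge `uv` plus two distinct `uv`-paths avoiding the
base edge, of length at most `ℓ`, with internal vertices of degree `< Δ`, and such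
that every common edge `f` of the two paths makes `{base, f}` a 2-edge-cut. -/
structure Earring (G : Multigraph V E) (ℓ Δ : ℕ) where
  base : E
  u : V
  v : V
  une : u ≠ v
  ends_base : G.ends base = s(u, v)
  P : G.MPath u v
  Q : G.MPath u v
  PQ_distinct : P.verts ≠ Q.verts ∨ P.edges ≠ Q.edges
  base_not_P : base ∉ P.edges
  base_not_Q : base ∉ Q.edges
  lenP : P.edges.length ≤ ℓ
  lenQ : Q.edges.length ≤ ℓ
  degP : ∀ w ∈ P.internal, G.degree w < Δ
  degQ : ∀ w ∈ Q.internal, G.degree w < Δ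
  common_cut : ∀ f, f ∈ P.edges → f ∈ Q.edges → G.IsTwoEdgeCut base f

def Earring.edgeSet {G : Multigraph V E} {ℓ Δ : ℕ} (X : G.Earring ℓ Δ) : Set E :=
  {X.base} ∪ {e | e ∈ X.P.edges} ∪ {e | e ∈ X.Q.edges}

def Earring.vertexSet {G : Multigraph V E} {ℓ Δ : ℕ} (X : G.Earring ℓ Δ) : Set V :=
  {w | w ∈ X.P.verts ∨ w ∈ X.Q.verts}

/-- A drawing of a multigraph in the plane: an injective placement of the vertices
together with, for each edge, a simple arc joining the placements of its endpoints,
whose interior avoids all vertices. -/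
structure Drawing (G : Multigraph V E) where
  vpos : V → ℝ × ℝ
  arc : E → ℝ → ℝ × ℝ
  vpos_inj : Function.Injective vpos
  arc_cont : ∀ e, ContinuousOn (arc e) (Set.Icc 0 1)
  arc_inj : ∀ e, Set.InjOn (arc e) (Set.Icc 0 1)
  arc_ends : ∀ e, ∃ x y : V, G.ends e = s(x, y) ∧ arc e 0 = vpos x ∧ arc e 1 = vpos y
  arc_avoid : ∀ e, ∀ t ∈ Set.Ioo (0:ℝ) 1, ∀ x : V, arc e t ≠ vpos x

/-- The (doubly counted) set of crossings of a drawing: interior points where two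
distinct edges meet. -/
def Drawing.CrossSet {G : Multigraph V E} (D : G.Drawing) : Set ((E × E) × ℝ × ℝ) :=
  {q | q.1.1 ≠ q.1.2 ∧ q.2.1 ∈ Set.Ioo (0:ℝ) 1 ∧ q.2.2 ∈ Set.Ioo (0:ℝ) 1 ∧
    D.arc q.1.1 q.2.1 = D.arc q.1.2 q.2.2}

/-- A good drawing: one with finitely many crossings. -/
structure GoodDrawing (G : Multigraph V E) extends G.Drawing where
  finCross : toDrawing.CrossSet.Finite

/-- The number of crossings of a good drawing (each crossing is recorded twice
in `CrossSet`). -/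
noncomputable def GoodDrawing.crossings {G : Multigraph V E} (D : G.GoodDrawing) : ℕ :=
  D.toDrawing.CrossSet.ncard / 2

/-- The crossing number: the least number of crossings of a drawing. -/
noncomputable def crNum (G : Multigraph V E) : ℕ :=
  sInf {n : ℕ | ∃ D : G.GoodDrawing, D.crossings = n}

/-- A multigraph is planar if it has a crossing-free drawing. -/
def IsPlanar (G : Multigraph V E) : Prop := ∃ D : G.Drawing, D.CrossSet = ∅

/-- Deleting a set of edges. -/
def delete (G : Multigraph V E) (S : Set E) : Multigraph V {e : E // e ∉ S} :=
  ⟨fun e => G.ends e.1⟩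

/-- The image (point set) of a drawing in the plane. -/
def Drawing.image {G : Multigraph V E} (D : G.Drawing) : Set (ℝ × ℝ) :=
  Set.range D.vpos ∪ ⋃ e : E, D.arc e '' Set.Icc 0 1

/-- The faces of a drawing: the connected components of the complement of its image. -/
def Drawing.Faces {G : Multigraph V E} (D : G.Drawing) : Set (Set (ℝ × ℝ)) :=
  {C | ∃ p ∉ D.image, C = connectedComponentIn D.imageᶜ p}

/-- A vertex is incident with a face if its placement lies on the face's closure. -/
def Drawing.FaceIncident {G : Multigraph V E} (D : G.Drawing) (x : V) (C : Set (ℝ × ℝ)) :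
    Prop := D.vpos x ∈ closure C

/-- The weighted number of crossings of a good drawing. -/
noncomputable def GoodDrawing.wcross {G : Multigraph V E} (D : G.GoodDrawing)
    (w : E → ℝ) : ℝ :=
  (∑ q ∈ D.finCross.toFinset, w q.1.1 * w q.1.2) / 2

/-- The weighted crossing number of `(G, w)`. -/
noncomputable def wcr (G : Multigraph V E) (w : E → ℝ) : ℝ :=
  sInf {x : ℝ | ∃ D : G.GoodDrawing, D.wcross w = x}

end Multigraph

/-- The uniform probability measure on `[0,1]^E`, modelling i.i.d. uniform `[0,1]`
weights on the edges. -/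
noncomputable def cubeMeasure (E : Type) [Fintype E] : MeasureTheory.Measure (E → ℝ) :=
  (MeasureTheory.volume : MeasureTheory.Measure (E → ℝ)).restrict
    {w | ∀ e, w e ∈ Set.Icc (0:ℝ) 1}

/-- A combinatorial map (graph embedded in an orientable surface), given by the
rotation permutation `σ` and the fixed-point-free edge involution `α` on darts. -/
structure CombMap (D : Type) [Fintype D] where
  σ : Equiv.Perm D
  α : Equiv.Perm D
  α_invol : ∀ d, α (α d) = d
  α_ne : ∀ d, α d ≠ d

namespace CombMap

variable {D : Type} [Fintype D] (M : CombMap D)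

/-- Darts in the same `σ`-orbit emanate from the same vertex. -/
def vSetoid : Setoid D :=
  ⟨M.σ.SameCycle, ⟨fun _ => Equiv.Perm.SameCycle.refl _ _, fun h => h.symm,
    fun h h' => h.trans h'⟩⟩

def Vertices := Quotient M.vSetoid

def vmk (d : D) : M.Vertices := Quotient.mk M.vSetoid d

/-- The face permutation. -/
def φ : Equiv.Perm D := M.σ * M.α

/-- Darts in the same `φ`-orbit lie on the same face. -/
def fSetoid : Setoid D :=
  ⟨M.φ.SameCycle, ⟨fun _ => Equiv.Perm.SameCycle.refl _ _, fun h => h.symm,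
    fun h h' => h.trans h'⟩⟩

def Faces := Quotient M.fSetoid

def fmk (d : D) : M.Faces := Quotient.mk M.fSetoid d

/-- The degree of the vertex at a dart `d`: the number of darts at that vertex. -/
noncomputable def degreeD (d : D) : ℕ := Set.ncard {d' | M.σ.SameCycle d d'}

/-- The length of the face at a dart `d`: the length of its boundary walk. -/
noncomputable def faceLenD (d : D) : ℕ := Set.ncard {d' | M.φ.SameCycle d d'}

noncomputable def nV : ℕ := Nat.card M.Vertices
noncomputable def nF : ℕ := Nat.card M.Faces
noncomputable def nE (_M : CombMap D) : ℕ := Fintype.card D / 2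

/-- Connectedness of the map. -/
def Conn : Prop :=
  ∀ d d' : D, Relation.ReflTransGen (fun a b => b = M.σ a ∨ b = M.α a) d d'

/-- Euler's formula with characteristic 2: the map is an embedding in the plane
(sphere). -/
def EulerPlanar : Prop := (M.nV : ℤ) + M.nF = M.nE + 2

/-- No loops. -/
def NoLoops : Prop := ∀ d, ¬ M.σ.SameCycle d (M.α d)

/-- Simple: no loops and no parallel edges. -/
def Simple : Prop := M.NoLoops ∧
  ∀ d d', M.σ.SameCycle d d' → M.σ.SameCycle (M.α d) (M.α d') → d' = d

/-- Two darts lie on the same edge iff they are equal or `α`-related. -/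
def eSetoid : Setoid D :=
  ⟨fun d d' => d' = d ∨ d' = M.α d, by
    refine ⟨fun d => Or.inl rfl, ?_, ?_⟩
    · rintro x y (rfl | rfl)
      · exact Or.inl rfl
      · exact Or.inr (M.α_invol x).symm
    · rintro x y z (rfl | rfl) (rfl | rfl)
      · exact Or.inl rfl
      · exact Or.inr rfl
      · exact Or.inr rfl
      · exact Or.inl (M.α_invol x)⟩

def Edges := Quotient M.eSetoid

def emk (d : D) : M.Edges := Quotient.mk M.eSetoid d

/-- The underlying multigraph of a combinatorial map. -/
def toMultigraph : Multigraph M.Vertices M.Edges :=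
  ⟨Quotient.lift (fun d => s(M.vmk d, M.vmk (M.α d))) (by
    rintro d d' (rfl | rfl)
    · rfl
    · show s(M.vmk d, M.vmk (M.α d)) = s(M.vmk (M.α d), M.vmk (M.α (M.α d)))
      rw [M.α_invol]
      exact Sym2.eq_swap)⟩

/-- The dual map: faces become vertices. -/
def dual : CombMap D := ⟨M.φ, M.α, M.α_invol, M.α_ne⟩

/-- The set of parallel edges joining `u` and `v`. -/
def parallels (u v : M.Vertices) : Set M.Edges :=
  {e | M.toMultigraph.ends e = s(u, v)}

/-- Cleanness of the embedding: each class of `k ≥ 2` pairwise parallel edges is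
drawn consecutively, i.e. bounds `k − 1` faces of length 2 consisting solely of
edges of the class. -/
def IsClean : Prop :=
  ∀ u v : M.Vertices, u ≠ v → 2 ≤ (M.parallels u v).ncard →
    Set.ncard {f : M.Faces | ∃ d, M.fmk d = f ∧ M.faceLenD d = 2 ∧
      ∀ d', M.φ.SameCycle d d' → M.emk d' ∈ M.parallels u v} =
      (M.parallels u v).ncard - 1

end CombMap

section StatementTwoAux

open Finset
attribute [local instance] Classical.propDecidable

namespace CombMap

variable {D : Type} [Fintype D] (M : CombMap D)

noncomputable local instance : Fintype M.Vertices := Quotient.fintype M.vSetoid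
noncomputable local instance : Fintype M.Faces := Quotient.fintype M.fSetoid
noncomputable local instance : Fintype M.Edges := Quotient.fintype M.eSetoid

lemma card_sum_fibers (S : Setoid D) :
    Fintype.card D = ∑ q : Quotient S, (univ.filter fun d => Quotient.mk S d = q).card := by
  rw [← card_univ]
  exact Finset.card_eq_sum_card_fiberwise (fun x _ => mem_univ _)

lemma faceLen_eq (d : D) :
    M.faceLenD d = (univ.filter fun d' => M.fmk d' = M.fmk d).card := by
  rw [faceLenD, ← Set.ncard_coe_finset]
  congr 1
  ext d'
  simp only [Set.mem_setOf_eq, coe_filter, mem_univ, true_and]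
  constructor
  · exact fun h => Quotient.sound (Equiv.Perm.SameCycle.symm h)
  · exact fun h => Equiv.Perm.SameCycle.symm (Quotient.exact h)

lemma degree_eq (d : D) :
    M.degreeD d = (univ.filter fun d' => M.vmk d' = M.vmk d).card := by
  rw [degreeD, ← Set.ncard_coe_finset]
  congr 1
  ext d'
  simp only [Set.mem_setOf_eq, coe_filter, mem_univ, true_and]
  constructor
  · exact fun h => Quotient.sound (Equiv.Perm.SameCycle.symm h)
  · exact fun h => Equiv.Perm.SameCycle.symm (Quotient.exact h)

lemma edge_fiber_eq (d : D) :
    (univ.filter fun d' => M.emk d' = M.emk d) = {d, M.α d} := by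
  ext d'
  simp only [mem_filter, mem_univ, true_and, mem_insert, mem_singleton]
  constructor
  · intro h
    rcases (Quotient.exact h : M.eSetoid.r d' d) with (h' | h')
    · left; exact h'.symm
    · right; rw [h', M.α_invol]
  · rintro (rfl | rfl)
    · rfl
    · exact Quotient.sound (Or.inr (M.α_invol d).symm)

lemma card_eq_two_mul_edges : Fintype.card D = 2 * Fintype.card M.Edges := by
  rw [card_sum_fibers M.eSetoid]
  have h2 : ∀ q : Quotient M.eSetoid,
      (univ.filter fun d => Quotient.mk M.eSetoid d = q).card = 2 := by
    intro q
    obtain ⟨d, rfl⟩ := Quotient.exists_rep q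
    rw [show (univ.filter fun d' => Quotient.mk M.eSetoid d' = Quotient.mk M.eSetoid d)
        = (univ.filter fun d' => M.emk d' = M.emk d) from by congr, edge_fiber_eq]
    rw [card_insert_of_notMem (by simp [Ne.symm (M.α_ne d)]), card_singleton]
  rw [Finset.sum_congr rfl (fun q _ => h2 q), Finset.sum_const, smul_eq_mul, mul_comm]
  rfl

lemma three_mul_vertices_le (hdeg : ∀ d : D, 3 ≤ M.degreeD d) :
    3 * Fintype.card M.Vertices ≤ Fintype.card D := by
  rw [card_sum_fibers M.vSetoid]
  calc 3 * Fintype.card M.Vertices = ∑ _q : Quotient M.vSetoid, 3 := by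
        rw [Finset.sum_const, smul_eq_mul, mul_comm]; rfl
    _ ≤ _ := by
        apply Finset.sum_le_sum
        intro q _
        obtain ⟨d, rfl⟩ := Quotient.exists_rep q
        rw [show (univ.filter fun d' => Quotient.mk M.vSetoid d' = Quotient.mk M.vSetoid d)
            = (univ.filter fun d' => M.vmk d' = M.vmk d) from by congr, ← degree_eq]
        exact hdeg d

lemma three_le_faceLen (hs : M.Simple) (hdeg : ∀ d : D, 3 ≤ M.degreeD d) (d : D) :
    3 ≤ M.faceLenD d := by
  have hφ : ∀ x, M.φ x = M.σ (M.α x) := fun x => rfl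
  have hba : M.φ d ≠ d := by
    intro h
    exact hs.1 d (Equiv.Perm.SameCycle.symm ⟨1, by simpa [hφ] using h⟩)
  have hca : M.φ (M.φ d) ≠ d := by
    intro h
    have h1 : M.σ.SameCycle (M.α d) (M.φ d) := ⟨1, by simp [hφ]⟩
    have h2 : M.σ.SameCycle (M.α (M.φ d)) d := ⟨1, by rw [zpow_one, ← hφ, h]⟩
    have h3 : M.σ.SameCycle (M.α (M.α d)) (M.α (M.φ d)) := by
      rw [M.α_invol]; exact h2.symm
    have h4 : M.φ d = M.α d := hs.2 (M.α d) (M.φ d) h1 h3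
    have hfix : M.σ (M.α d) = M.α d := by rw [← hφ, h4]
    have hdeg1 : M.degreeD (M.α d) = 1 := by
      rw [degreeD]
      have hset : {d' | M.σ.SameCycle (M.α d) d'} = {M.α d} := by
        ext x
        simp only [Set.mem_setOf_eq, Set.mem_singleton_iff]
        constructor
        · rintro ⟨n, hn⟩
          rw [← hn]; exact Function.IsFixedPt.perm_zpow hfix n
        · rintro rfl; exact Equiv.Perm.SameCycle.refl _ _
      rw [hset, Set.ncard_singleton]
    have := hdeg (M.α d)
    omega
  have hcb : M.φ (M.φ d) ≠ M.φ d := fun h => hba (M.φ.injective h)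
  have hsub : ({d, M.φ d, M.φ (M.φ d)} : Set D) ⊆ {d' | M.φ.SameCycle d d'} := by
    rintro x (rfl | rfl | rfl)
    · exact Equiv.Perm.SameCycle.refl _ _
    · exact ⟨1, by simp⟩
    · exact ⟨2, by rw [zpow_two, Equiv.Perm.mul_apply]⟩
  have h3 : ({d, M.φ d, M.φ (M.φ d)} : Set D).ncard = 3 :=
    Set.ncard_eq_three.mpr ⟨d, M.φ d, M.φ (M.φ d),
      Ne.symm hba, Ne.symm hca, Ne.symm hcb, rfl⟩
  calc 3 = ({d, M.φ d, M.φ (M.φ d)} : Set D).ncard := h3.symm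
    _ ≤ _ := Set.ncard_le_ncard hsub (Set.toFinite _)

lemma main_count (heuler : M.EulerPlanar) (hs : M.Simple)
    (hdeg : ∀ d : D, 3 ≤ M.degreeD d) (r : ℕ) :
    (r : ℤ) * (M.nF : ℤ) + 12 ≤ ((r : ℤ) + 3) *
      (Set.ncard {f : M.Faces | ∃ d, M.fmk d = f ∧ M.faceLenD d ≤ r + 5} : ℤ) := by
  set p : M.Faces → Prop := fun f => ∃ d, M.fmk d = f ∧ M.faceLenD d ≤ r + 5 with hp
  set T : Finset M.Faces := univ.filter p with hTdef
  set fib : M.Faces → ℕ := fun q => (univ.filter fun d => M.fmk d = q).card with hfib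
  have hT : ({f : M.Faces | p f}).ncard = T.card := by
    rw [← Set.ncard_coe_finset]
    congr 1
    ext f
    simp [hTdef]
  have hfibmk : ∀ d : D, fib (M.fmk d) = M.faceLenD d := fun d => (M.faceLen_eq d).symm
  have hsum : Fintype.card D = ∑ q : M.Faces, fib q := by
    rw [card_sum_fibers M.fSetoid]
    apply Finset.sum_congr rfl
    intro q _
    congr
  have h3 : ∀ q : M.Faces, 3 ≤ fib q := by
    intro q
    obtain ⟨d, rfl⟩ := Quotient.exists_rep q
    rw [show Quotient.mk M.fSetoid d = M.fmk d from rfl, hfibmk]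
    exact M.three_le_faceLen hs hdeg d
  have hlong : ∀ q ∈ univ.filter (fun q => ¬ p q), r + 6 ≤ fib q := by
    intro q hq
    rw [mem_filter] at hq
    obtain ⟨d, rfl⟩ := Quotient.exists_rep q
    rw [show Quotient.mk M.fSetoid d = M.fmk d from rfl, hfibmk]
    by_contra hcon
    exact hq.2 ⟨d, rfl, by omega⟩
  -- sum bounds
  have hsplit : ∑ q : M.Faces, fib q
      = ∑ q ∈ T, fib q + ∑ q ∈ univ.filter (fun q => ¬ p q), fib q :=
    (Finset.sum_filter_add_sum_filter_not univ p fib).symm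
  have hA : 3 * T.card ≤ ∑ q ∈ T, fib q := by
    have := Finset.card_nsmul_le_sum T fib 3 (fun q _ => h3 q)
    simpa [mul_comm] using this
  have hB : (r + 6) * (univ.filter (fun q => ¬ p q)).card
      ≤ ∑ q ∈ univ.filter (fun q => ¬ p q), fib q := by
    have := Finset.card_nsmul_le_sum (univ.filter (fun q => ¬ p q)) fib (r + 6) hlong
    simpa [mul_comm] using this
  have hcc : T.card + (univ.filter (fun q => ¬ p q)).card = Fintype.card M.Faces := by
    rw [hTdef]
    simpa using Finset.card_filter_add_card_filter_not (s := univ) (p := p)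
  -- Euler side
  have hVc : M.nV = Fintype.card M.Vertices := Nat.card_eq_fintype_card
  have hFc : M.nF = Fintype.card M.Faces := Nat.card_eq_fintype_card
  have hE2 : Fintype.card D = 2 * Fintype.card M.Edges := M.card_eq_two_mul_edges
  have hEc : M.nE = Fintype.card M.Edges := by
    rw [nE, hE2]
    omega
  have hVle : 3 * Fintype.card M.Vertices ≤ Fintype.card D := M.three_mul_vertices_le hdeg
  have heuler' : (Fintype.card M.Vertices : ℤ) + (Fintype.card M.Faces : ℤ)
      = (Fintype.card M.Edges : ℤ) + 2 := by
    have := heuler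
    rw [EulerPlanar, hVc, hFc, hEc] at this
    exact_mod_cast this
  -- put everything together over ℤ
  rw [hFc, hT]
  have hDle : (Fintype.card D : ℤ) + 12 ≤ 6 * (Fintype.card M.Faces : ℤ) := by
    have h1 : (Fintype.card D : ℤ) = 2 * (Fintype.card M.Edges : ℤ) := by exact_mod_cast hE2
    have h2 : 3 * (Fintype.card M.Vertices : ℤ) ≤ (Fintype.card D : ℤ) := by exact_mod_cast hVle
    linarith [heuler']
  have hsum' : 3 * (T.card : ℤ)
      + ((r : ℤ) + 6) * (((univ.filter (fun q => ¬ p q)).card : ℕ) : ℤ)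
      ≤ (Fintype.card D : ℤ) := by
    have h1 : (Fintype.card D : ℤ) = ((∑ q : M.Faces, fib q : ℕ) : ℤ) := by exact_mod_cast hsum
    have h2 : ((3 * T.card : ℕ) : ℤ) ≤ ((∑ q ∈ T, fib q : ℕ) : ℤ) := by exact_mod_cast hA
    have h3' : (((r + 6) * (univ.filter (fun q => ¬ p q)).card : ℕ) : ℤ)
        ≤ ((∑ q ∈ univ.filter (fun q => ¬ p q), fib q : ℕ) : ℤ) := by exact_mod_cast hB
    have h4 : ((∑ q : M.Faces, fib q : ℕ) : ℤ)
        = ((∑ q ∈ T, fib q : ℕ) : ℤ) + ((∑ q ∈ univ.filter (fun q => ¬ p q), fib q : ℕ) : ℤ) := by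
      exact_mod_cast hsplit
    push_cast at h2 h3' ⊢
    linarith
  have hNz : (T.card : ℤ) + (((univ.filter (fun q => ¬ p q)).card : ℕ) : ℤ)
      = (Fintype.card M.Faces : ℤ) := by exact_mod_cast hcc
  have hNsub : ((r : ℤ) + 6) * (((univ.filter (fun q => ¬ p q)).card : ℕ) : ℤ)
      = ((r : ℤ) + 6) * ((Fintype.card M.Faces : ℤ) - (T.card : ℤ)) := by
    rw [show (((univ.filter (fun q => ¬ p q)).card : ℕ) : ℤ)
      = (Fintype.card M.Faces : ℤ) - (T.card : ℤ) by linarith]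
  nlinarith [hsum', hNsub, hDle]

end CombMap

/-- In a connected simple plane graph with minimum degree at least 3,
at least `(r·|F| + 12)/(r + 3)` of the `|F|` faces have length at most `r + 5`. -/
theorem statement2 {D : Type} [Fintype D] (M : CombMap D)
    (hconn : M.Conn) (heuler : M.EulerPlanar) (hsimple : M.Simple)
    (hdeg : ∀ d : D, 3 ≤ M.degreeD d) (r : ℕ) :
    ((r : ℝ) * (M.nF : ℝ) + 12) / ((r : ℝ) + 3) ≤
      (Set.ncard {f : M.Faces | ∃ d, M.fmk d = f ∧ M.faceLenD d ≤ r + 5} : ℝ) := by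
  have key := M.main_count heuler hsimple hdeg r
  have hpos : (0 : ℝ) < (r : ℝ) + 3 := by positivity
  rw [div_le_iff₀ hpos]
  have key' : (r : ℝ) * (M.nF : ℝ) + 12 ≤ ((r : ℝ) + 3) *
      (Set.ncard {f : M.Faces | ∃ d, M.fmk d = f ∧ M.faceLenD d ≤ r + 5} : ℝ) := by
    exact_mod_cast key
  linarith

end StatementTwoAux
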